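/- Let A be a real symmetric n×n matrix and let A₀ = diag(a_{1,1}, …, a_{n,n}) be its diagonal part. Then trace((A − A₀)⁴) ≤ 16 · trace(A⁴). -/
import Mathlib


open Matrix

/-- For a real symmetric matrix `A` with diagonal part `A₀`,
`trace((A - A₀)⁴) ≤ 16 trace(A⁴)`. -/
theorem trace_offdiag_pow_four_le
    (n : ℕ) (A : Matrix (Fin n) (Fin n) ℝ) (hA : A.IsSymm) :
    ((A - Matrix.diagonal fun i => A i i) ^ 4).trace ≤ 16 * (A ^ 4).trace := by
  set B : Matrix (Fin n) (Fin n) ℝ := A - Matrix.diagonal fun i => A i i with hBdef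
  set M : Matrix (Fin n) (Fin n) ℝ := A * A with hMdef
  set N : Matrix (Fin n) (Fin n) ℝ := B * B with hNdef
  have hAs : ∀ i j, A j i = A i j := fun i j => hA.apply i j
  have hB : ∀ i j, B i j = A i j - if i = j then A i i else 0 := by
    intro i j
    simp [hBdef, Matrix.sub_apply, Matrix.diagonal_apply]
  have hMsym : ∀ i j, M j i = M i j := by
    intro i j
    simp only [hMdef, Matrix.mul_apply]
    exact Finset.sum_congr rfl fun k _ => by rw [hAs k j, hAs i k]; ring
  -- trace of fourth power as sum of squares of entries of the square
  have htr : ∀ (C : Matrix (Fin n) (Fin n) ℝ), (∀ i j, C j i = C i j) →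
      (C * C).trace = ∑ i, ∑ j, (C i j) ^ 2 := by
    intro C hC
    simp only [Matrix.trace, Matrix.diag, Matrix.mul_apply]
    exact Finset.sum_congr rfl fun i _ =>
      Finset.sum_congr rfl fun j _ => by rw [hC i j]; ring
  have hA4 : (A ^ 4).trace = ∑ i, ∑ j, (M i j) ^ 2 := by
    have h4 : A ^ 4 = M * M := by
      rw [hMdef, show (4 : ℕ) = 2 + 2 from rfl, pow_add, pow_two]
    rw [h4, htr M hMsym]
  have hBsym : ∀ i j, B j i = B i j := by
    intro i j
    rw [hB, hB, hAs i j]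
    by_cases h : i = j
    · simp [h]
    · simp [h, Ne.symm h]
  have hNsym : ∀ i j, N j i = N i j := by
    intro i j
    simp only [hNdef, Matrix.mul_apply]
    exact Finset.sum_congr rfl fun k _ => by rw [hBsym k j, hBsym i k]; ring
  have hB4 : (B ^ 4).trace = ∑ i, ∑ j, (N i j) ^ 2 := by
    have h4 : B ^ 4 = N * N := by
      rw [hNdef, show (4 : ℕ) = 2 + 2 from rfl, pow_add, pow_two]
    rw [h4, htr N hNsym]
  -- entry formula for N
  have hN : ∀ i j, N i j = M i j - A i i * A i j - A i j * A j j
      + (if i = j then A i i * A i i else 0) := by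
    intro i j
    have key : ∀ k, B i k * B k j = A i k * A k j - (if i = k then A i i * A k j else 0)
        - (if k = j then A i k * A j j else 0)
        + (if i = k then (if k = j then A i i * A j j else 0) else 0) := by
      intro k
      rw [hB, hB]
      split_ifs <;> subst_vars <;> ring
    simp only [hNdef, Matrix.mul_apply, key, Finset.sum_add_distrib, Finset.sum_sub_distrib,
      Finset.sum_ite_eq, Finset.sum_ite_eq', Finset.mem_univ, if_true]
    rw [show M i j = ∑ k, A i k * A k j from rfl]
    by_cases h : i = j <;> simp [h]
  -- basic facts about diagonal of M
  have hMdiag : ∀ i, M i i = ∑ j, (A i j) ^ 2 := by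
    intro i
    simp only [hMdef, Matrix.mul_apply]
    exact Finset.sum_congr rfl fun k _ => by rw [hAs i k]; ring
  have hMnn : ∀ i, 0 ≤ M i i := fun i => by
    rw [hMdiag]; exact Finset.sum_nonneg fun j _ => sq_nonneg _
  have hdle : ∀ i, (A i i) ^ 2 ≤ M i i := fun i => by
    rw [hMdiag]
    exact Finset.single_le_sum (fun j _ => sq_nonneg (A i j)) (Finset.mem_univ i)
  set T : ℝ := ∑ i, ∑ j, (M i j) ^ 2 with hT
  have hdiagT : ∑ i, (M i i) ^ 2 ≤ T := by
    rw [hT]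
    refine Finset.sum_le_sum fun i _ => ?_
    exact Finset.single_le_sum (fun j _ => sq_nonneg (M i j)) (Finset.mem_univ i)
  -- the three auxiliary sums, each ≤ T
  have hS3 : ∑ i, ∑ j, (A i i * A i j) ^ 2 ≤ T := by
    refine le_trans ?_ hdiagT
    refine Finset.sum_le_sum fun i _ => ?_
    have heq : ∑ j, (A i i * A i j) ^ 2 = (A i i) ^ 2 * M i i := by
      rw [hMdiag, Finset.mul_sum]
      exact Finset.sum_congr rfl fun j _ => by ring
    rw [heq, sq (M i i)]
    exact mul_le_mul_of_nonneg_right (hdle i) (hMnn i)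
  have hS2 : ∑ i, ∑ j, (A i j * A j j) ^ 2 ≤ T := by
    rw [Finset.sum_comm]
    refine le_trans ?_ hdiagT
    refine Finset.sum_le_sum fun j _ => ?_
    have heq : ∑ i, (A i j * A j j) ^ 2 = (A j j) ^ 2 * M j j := by
      rw [hMdiag, Finset.mul_sum]
      exact Finset.sum_congr rfl fun i _ => by rw [hAs j i]; ring
    rw [heq, sq (M j j)]
    exact mul_le_mul_of_nonneg_right (hdle j) (hMnn j)
  have hS4 : ∑ i, ∑ j, (if i = j then (A i i * A i i) else 0) ^ 2 ≤ T := by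
    refine le_trans ?_ hdiagT
    refine Finset.sum_le_sum fun i _ => ?_
    have heq : ∑ j, (if i = j then (A i i * A i i) else 0) ^ 2
        = (A i i * A i i) ^ 2 := by
      simp [apply_ite (fun x : ℝ => x ^ 2), Finset.sum_ite_eq]
    rw [heq]
    have hmm : (A i i) ^ 2 * (A i i) ^ 2 ≤ M i i * M i i :=
      mul_self_le_mul_self (sq_nonneg _) (hdle i)
    nlinarith [hmm]
  -- entrywise bound
  have hEntry : ∀ i j, (N i j) ^ 2 ≤ 4 * ((M i j) ^ 2 + (A i i * A i j) ^ 2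
      + (A i j * A j j) ^ 2 + (if i = j then (A i i * A i i) else 0) ^ 2) := by
    intro i j
    rw [hN]
    set a := M i j
    set b := A i i * A i j
    set c := A i j * A j j
    split_ifs with h
    · set e := A i i * A i i
      nlinarith [sq_nonneg (a + b), sq_nonneg (a + c), sq_nonneg (a - e),
        sq_nonneg (b - c), sq_nonneg (b + e), sq_nonneg (c + e)]
    · nlinarith [sq_nonneg (a + b), sq_nonneg (a + c), sq_nonneg (b - c),
        sq_nonneg a, sq_nonneg b, sq_nonneg c]
  -- put everything together
  rw [hB4, hA4]
  have step : ∑ i, ∑ j, (N i j) ^ 2 ≤ 4 * ((∑ i, ∑ j, (M i j) ^ 2)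
      + (∑ i, ∑ j, (A i i * A i j) ^ 2) + (∑ i, ∑ j, (A i j * A j j) ^ 2)
      + (∑ i, ∑ j, (if i = j then (A i i * A i i) else 0) ^ 2)) := by
    have hle := Finset.sum_le_sum (s := (Finset.univ : Finset (Fin n)))
      (fun i _ => Finset.sum_le_sum (s := (Finset.univ : Finset (Fin n)))
        (fun j _ => hEntry i j))
    refine hle.trans (le_of_eq ?_)
    simp only [mul_add, Finset.sum_add_distrib, Finset.mul_sum]
  refine step.trans ?_
  rw [← hT]
  linarith [hS2, hS3, hS4]
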